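/- arXiv:0708.1528 — 6 statements merged into one kernel-verified Lean document; each statement's English description precedes it below -/
import Mathlib

section
/- For fixed nonnegative integers n, u, v with u+v ≤ n and positive integers k, l, the sum ∑_{s=0}^{u} (-1)^{s+v} C(n+2k-1, n-v-s) C(n+2l-1, v+s) · ((v+s)!/v!) · ((n-v-s)!/(n-v-u)!) · C(2k+v+s-1, s) · C(2l+n-v-s-1, u-s) equals (-1)^v · (n+2k-1)!(n+2l-1)! / ((2k+v-1)! v! (n-v-u)! (2l+n-u-v-1)! u!) · ∑_{s=0}^{u} (-1)^s C(u,s), and in particular it is zero unless u = 0. -/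
open Finset

private lemma term_eq (n u v k l s : ℕ) (hk : 0 < k) (hl : 0 < l) (huv : u + v ≤ n)
    (hs : s ≤ u) :
    (-1 : ℚ) ^ (s + v) * (Nat.choose (n + 2*k - 1) (n - v - s)) *
          (Nat.choose (n + 2*l - 1) (v + s)) *
          ((Nat.factorial (v + s) : ℚ) / (Nat.factorial v)) *
          ((Nat.factorial (n - v - s) : ℚ) / (Nat.factorial (n - v - u))) *
          (Nat.choose (2*k + v + s - 1) s) *
          (Nat.choose (2*l + n - v - s - 1) (u - s))
      = (-1 : ℚ) ^ v *
          ((Nat.factorial (n + 2*k - 1) : ℚ) * (Nat.factorial (n + 2*l - 1)) /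
            ((Nat.factorial (2*k + v - 1) : ℚ) * (Nat.factorial v) *
              (Nat.factorial (n - v - u)) * (Nat.factorial (2*l + n - u - v - 1)) *
              (Nat.factorial u))) *
          ((-1 : ℚ) ^ s * (Nat.choose u s)) := by
  have h1 : n - v - s ≤ n + 2*k - 1 := by omega
  have h2 : v + s ≤ n + 2*l - 1 := by omega
  have h3 : s ≤ 2*k + v + s - 1 := by omega
  have h4 : u - s ≤ 2*l + n - v - s - 1 := by omega
  rw [Nat.cast_choose ℚ h1, Nat.cast_choose ℚ h2, Nat.cast_choose ℚ h3,
    Nat.cast_choose ℚ h4, Nat.cast_choose ℚ hs]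
  have e1 : n + 2*k - 1 - (n - v - s) = 2*k + v + s - 1 := by omega
  have e2 : n + 2*l - 1 - (v + s) = 2*l + n - v - s - 1 := by omega
  have e3 : 2*k + v + s - 1 - s = 2*k + v - 1 := by omega
  have e4 : 2*l + n - v - s - 1 - (u - s) = 2*l + n - u - v - 1 := by omega
  rw [e1, e2, e3, e4, pow_add]
  have f : ∀ m : ℕ, ((Nat.factorial m : ℚ)) ≠ 0 := fun m => by
    exact_mod_cast (Nat.factorial_pos m).ne'
  field_simp

/-- The combinatorial identity underlying the expression of Rankin–Cohen brackets
via the Maass operator: the coefficient of `X̃^v f · X̃^{n-u-v} g` vanishes unless `u = 0`. -/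
theorem stmt0 (n u v k l : ℕ) (hk : 0 < k) (hl : 0 < l) (huv : u + v ≤ n) :
    (∑ s ∈ range (u + 1),
        (-1 : ℚ) ^ (s + v) * (Nat.choose (n + 2*k - 1) (n - v - s)) *
          (Nat.choose (n + 2*l - 1) (v + s)) *
          ((Nat.factorial (v + s) : ℚ) / (Nat.factorial v)) *
          ((Nat.factorial (n - v - s) : ℚ) / (Nat.factorial (n - v - u))) *
          (Nat.choose (2*k + v + s - 1) s) *
          (Nat.choose (2*l + n - v - s - 1) (u - s)))
      = (-1 : ℚ) ^ v *
          ((Nat.factorial (n + 2*k - 1) : ℚ) * (Nat.factorial (n + 2*l - 1)) /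
            ((Nat.factorial (2*k + v - 1) : ℚ) * (Nat.factorial v) *
              (Nat.factorial (n - v - u)) * (Nat.factorial (2*l + n - u - v - 1)) *
              (Nat.factorial u))) *
          (∑ s ∈ range (u + 1), (-1 : ℚ) ^ s * (Nat.choose u s)) ∧
    (u ≠ 0 →
      (∑ s ∈ range (u + 1),
          (-1 : ℚ) ^ (s + v) * (Nat.choose (n + 2*k - 1) (n - v - s)) *
            (Nat.choose (n + 2*l - 1) (v + s)) *
            ((Nat.factorial (v + s) : ℚ) / (Nat.factorial v)) *
            ((Nat.factorial (n - v - s) : ℚ) / (Nat.factorial (n - v - u))) *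
            (Nat.choose (2*k + v + s - 1) s) *
            (Nat.choose (2*l + n - v - s - 1) (u - s))) = 0) := by
  have main : (∑ s ∈ range (u + 1),
        (-1 : ℚ) ^ (s + v) * (Nat.choose (n + 2*k - 1) (n - v - s)) *
          (Nat.choose (n + 2*l - 1) (v + s)) *
          ((Nat.factorial (v + s) : ℚ) / (Nat.factorial v)) *
          ((Nat.factorial (n - v - s) : ℚ) / (Nat.factorial (n - v - u))) *
          (Nat.choose (2*k + v + s - 1) s) *
          (Nat.choose (2*l + n - v - s - 1) (u - s)))
      = (-1 : ℚ) ^ v *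
          ((Nat.factorial (n + 2*k - 1) : ℚ) * (Nat.factorial (n + 2*l - 1)) /
            ((Nat.factorial (2*k + v - 1) : ℚ) * (Nat.factorial v) *
              (Nat.factorial (n - v - u)) * (Nat.factorial (2*l + n - u - v - 1)) *
              (Nat.factorial u))) *
          (∑ s ∈ range (u + 1), (-1 : ℚ) ^ s * (Nat.choose u s)) := by
    rw [Finset.mul_sum]
    refine Finset.sum_congr rfl fun s hs => ?_
    rw [Finset.mem_range] at hs
    rw [term_eq n u v k l s hk hl huv (by omega)]
  refine ⟨main, fun hu => ?_⟩
  rw [main]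
  have : (∑ s ∈ range (u + 1), (-1 : ℚ) ^ s * (Nat.choose u s)) = 0 := by
    have := Int.alternating_sum_range_choose_of_ne hu
    have h2 : ((∑ s ∈ range (u + 1), (-1 : ℤ) ^ s * (Nat.choose u s) : ℤ) : ℚ) = 0 := by
      rw [this]; norm_num
    push_cast at h2
    convert h2 using 2
  rw [this, mul_zero]
end

section
/- Let k, l, m be positive integers and n ≥ 3 an integer. Then the 2×2 determinant det( [C(n,1)/((2k+2l)_{n-1}(2m)_1), C(n,n-1)/((2k)_{n-1}(2l+2m)_1)], [C(n,2)/((2k+2l)_{n-2}(2m)_2), C(n,n-2)/((2k)_{n-2}(2l+2m)_2)] ) is nonzero, where (α)_j = α(α+1)⋯(α+j−1) is the Pochhammer symbol. Specifically, it equals C(n,n-1)C(n,n-2) · [1/((2k+2l)_{n-2}(2m)(2k)_{n-2}(2l+2m))] · [−(2l)² − 2l(2k+2m+n−1)] / [(2k+2l+n−2)(2l+2m+1)(2m+1)(2k+n−2)], which is strictly negative. -/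
open Finset

/-- The ascending Pochhammer symbol `(x)_j = x(x+1)⋯(x+j−1)`. -/
def poch (x : ℝ) (j : ℕ) : ℝ := ∏ i ∈ Finset.range j, (x + i)

lemma poch_pos {x : ℝ} (hx : 0 < x) (j : ℕ) : 0 < poch x j := by
  apply Finset.prod_pos
  intro i _
  positivity

lemma poch_succ (x : ℝ) (j : ℕ) : poch x (j + 1) = poch x j * (x + j) :=
  Finset.prod_range_succ _ _

/-- The 2×2 determinant appearing in the uniqueness argument for the coefficients `A_n`
is given by an explicit negative expression, hence is nonzero. -/
theorem stmt6 (k l m : ℕ) (hk : 0 < k) (hl : 0 < l) (hm : 0 < m) (n : ℕ) (hn : 3 ≤ n) :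
    Matrix.det
        !![(Nat.choose n 1 : ℝ) / (poch (2*k + 2*l) (n - 1) * poch (2*m) 1),
             (Nat.choose n (n - 1) : ℝ) / (poch (2*k) (n - 1) * poch (2*l + 2*m) 1);
           (Nat.choose n 2 : ℝ) / (poch (2*k + 2*l) (n - 2) * poch (2*m) 2),
             (Nat.choose n (n - 2) : ℝ) / (poch (2*k) (n - 2) * poch (2*l + 2*m) 2)]
      = (Nat.choose n (n - 1) : ℝ) * (Nat.choose n (n - 2)) *
          (1 / (poch (2*k + 2*l) (n - 2) * (2*m) * poch (2*k) (n - 2) * (2*l + 2*m))) *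
          ((-(2*l : ℝ)^2 - (2*l) * (2*k + 2*m + n - 1)) /
            ((2*k + 2*l + n - 2) * (2*l + 2*m + 1) * (2*m + 1) * (2*k + n - 2))) ∧
    Matrix.det
        !![(Nat.choose n 1 : ℝ) / (poch (2*k + 2*l) (n - 1) * poch (2*m) 1),
             (Nat.choose n (n - 1) : ℝ) / (poch (2*k) (n - 1) * poch (2*l + 2*m) 1);
           (Nat.choose n 2 : ℝ) / (poch (2*k + 2*l) (n - 2) * poch (2*m) 2),
             (Nat.choose n (n - 2) : ℝ) / (poch (2*k) (n - 2) * poch (2*l + 2*m) 2)]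
      < 0 := by
  obtain ⟨p, rfl⟩ : ∃ p, n = p + 3 := ⟨n - 3, by omega⟩
  have h21 : p + 3 - 1 = p + 2 := by omega
  have h22 : p + 3 - 2 = p + 1 := by omega
  rw [h21, h22]
  have hc1 : Nat.choose (p + 3) 1 = p + 3 := Nat.choose_one_right _
  have hc2 : Nat.choose (p + 3) (p + 2) = p + 3 := Nat.choose_succ_self_right _
  have hc3 : Nat.choose (p + 3) (p + 1) = Nat.choose (p + 3) 2 := by
    have := Nat.choose_symm (n := p + 3) (k := 2) (by omega)
    simpa [h22] using this
  have hK : (0:ℝ) < k := by exact_mod_cast hk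
  have hL : (0:ℝ) < l := by exact_mod_cast hl
  have hM : (0:ℝ) < m := by exact_mod_cast hm
  have hA : 0 < poch (2*k + 2*l) (p + 1) := poch_pos (by linarith) _
  have hB : 0 < poch (2*k) (p + 1) := poch_pos (by linarith) _
  have e1 : poch (2*(k:ℝ) + 2*l) (p + 2) = poch (2*k + 2*l) (p + 1) * (2*k + 2*l + (p+1)) := by
    rw [poch_succ]; push_cast; ring
  have e2 : poch (2*(k:ℝ)) (p + 2) = poch (2*k) (p + 1) * (2*k + (p+1)) := by
    rw [poch_succ]; push_cast; ring
  have e3 : poch (2*(m:ℝ)) 1 = 2*m := by simp [poch]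
  have e4 : poch (2*(l:ℝ) + 2*m) 1 = 2*l + 2*m := by simp [poch]
  have e5 : poch (2*(m:ℝ)) 2 = 2*m * (2*m + 1) := by
    simp [poch, Finset.prod_range_succ]
  have e6 : poch (2*(l:ℝ) + 2*m) 2 = (2*l + 2*m) * (2*l + 2*m + 1) := by
    simp [poch, Finset.prod_range_succ]
  rw [Matrix.det_fin_two_of, hc1, hc2, hc3, e1, e2, e3, e4, e5, e6]
  have hAne : poch (2*(k:ℝ) + 2*l) (p + 1) ≠ 0 := ne_of_gt hA
  have hBne : poch (2*(k:ℝ)) (p + 1) ≠ 0 := ne_of_gt hB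
  have h1 : (2*(m:ℝ)) ≠ 0 := by positivity
  have h2 : (2*(l:ℝ) + 2*m) ≠ 0 := by positivity
  have h3 : (2*(k:ℝ) + 2*l + (p+1)) ≠ 0 := by positivity
  have h4 : (2*(k:ℝ) + (p+1)) ≠ 0 := by positivity
  have h5 : (2*(m:ℝ) + 1) ≠ 0 := by positivity
  have h6 : (2*(l:ℝ) + 2*m + 1) ≠ 0 := by positivity
  have heq : ((p:ℝ) + 3) / (poch (2 * k + 2 * l) (p + 1) * (2 * k + 2 * l + (p + 1)) * (2 * m)) *
        (((p + 3).choose 2 : ℝ) / (poch (2 * k) (p + 1) * ((2 * l + 2 * m) * (2 * l + 2 * m + 1)))) -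
      ((p:ℝ) + 3) / (poch (2 * k) (p + 1) * (2 * k + (p + 1)) * (2 * l + 2 * m)) *
        (((p + 3).choose 2 : ℝ) / (poch (2 * k + 2 * l) (p + 1) * (2 * m * (2 * m + 1)))) =
    ((p:ℝ) + 3) * ((p + 3).choose 2 : ℝ) *
        (1 / (poch (2 * k + 2 * l) (p + 1) * (2 * m) * poch (2 * k) (p + 1) * (2 * l + 2 * m))) *
      ((-(2 * (l:ℝ)) ^ 2 - 2 * l * (2 * k + 2 * m + ((p:ℝ) + 3) - 1)) /
        ((2 * k + 2 * l + ((p:ℝ) + 3) - 2) * (2 * l + 2 * m + 1) * (2 * m + 1) * (2 * k + ((p:ℝ) + 3) - 2))) := by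
    have h3' : (2*(k:ℝ) + 2*l + ((p:ℝ)+3) - 2) ≠ 0 := by intro h; apply h3; linarith
    have h4' : (2*(k:ℝ) + ((p:ℝ)+3) - 2) ≠ 0 := by intro h; apply h4; linarith
    rw [div_mul_div_comm, div_mul_div_comm, div_sub_div _ _ (by positivity) (by positivity), mul_one_div, div_mul_div_comm, div_eq_div_iff (by positivity) (mul_ne_zero (by positivity) (mul_ne_zero (mul_ne_zero (mul_ne_zero h3' h6) h5) h4'))]
    ring
  have hC2 : (0:ℝ) < ((p + 3).choose 2 : ℝ) := by
    have : 0 < (p + 3).choose 2 := Nat.choose_pos (by omega)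
    exact_mod_cast this
  have hneg : ((p:ℝ) + 3) * ((p + 3).choose 2 : ℝ) *
        (1 / (poch (2 * k + 2 * l) (p + 1) * (2 * m) * poch (2 * k) (p + 1) * (2 * l + 2 * m))) *
      ((-(2 * (l:ℝ)) ^ 2 - 2 * l * (2 * k + 2 * m + ((p:ℝ) + 3) - 1)) /
        ((2 * k + 2 * l + ((p:ℝ) + 3) - 2) * (2 * l + 2 * m + 1) * (2 * m + 1) * (2 * k + ((p:ℝ) + 3) - 2))) < 0 := by
    apply mul_neg_of_pos_of_neg
    · positivity
    · apply div_neg_of_neg_of_pos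
      · nlinarith
      · have : (0:ℝ) < 2*k + 2*l + ((p:ℝ)+3) - 2 := by linarith
        have : (0:ℝ) < 2*k + ((p:ℝ)+3) - 2 := by linarith
        positivity
  constructor
  · push_cast
    exact heq
  · push_cast
    rw [heq]
    exact hneg
end

section
/- Suppose a function Ã defined on pairs of positive reals satisfies: (i) Ã(2k+2l, 2m) = Ã(2k, 2l+2m) for all positive reals k, l, m, and (ii) Ã(2k+2l,2m)·(1/(2m+1) − 1/(2k+2l+2m+1)) = Ã(2k,2l+2m)·(1/(2l+2m+1) − 1/(2k+2l+2m+1)) + Ã(2l,2m)·(1/(2m+1) − 1/(2l+2m+1)) for all positive reals k, l, m. Then Ã is constant on pairs of positive reals (x,y) with x, y > 2 in its domain, i.e., Ã(2l,2m) = Ã(2k+2l,2m) = Ã(2k,2l+2m) for all k, l, m > 0. -/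
/-- The two functional equations force `Ã` to be constant:
`Ã(2l,2m) = Ã(2k+2l,2m) = Ã(2k,2l+2m)` for all positive reals `k, l, m`. -/
theorem stmt9 (A : ℝ → ℝ → ℂ)
    (h2 : ∀ k l m : ℝ, 0 < k → 0 < l → 0 < m →
      A (2*k + 2*l) (2*m) = A (2*k) (2*l + 2*m))
    (h1 : ∀ k l m : ℝ, 0 < k → 0 < l → 0 < m →
      A (2*k + 2*l) (2*m) * ((1 / (2*m + 1) : ℂ) - 1 / (2*k + 2*l + 2*m + 1))
        = A (2*k) (2*l + 2*m) * ((1 / (2*l + 2*m + 1) : ℂ) - 1 / (2*k + 2*l + 2*m + 1))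
          + A (2*l) (2*m) * ((1 / (2*m + 1) : ℂ) - 1 / (2*l + 2*m + 1))) :
    ∀ k l m : ℝ, 0 < k → 0 < l → 0 < m →
      A (2*l) (2*m) = A (2*k + 2*l) (2*m) ∧
        A (2*k + 2*l) (2*m) = A (2*k) (2*l + 2*m) := by
  intro k l m hk hl hm
  have heq := h2 k l m hk hl hm
  refine ⟨?_, heq⟩
  have key := h1 k l m hk hl hm
  rw [heq] at key
  have hne : ((1 / (2*m + 1) : ℂ) - 1 / (2*l + 2*m + 1)) ≠ 0 := by
    have hm1 : (2*(m:ℂ)+1) ≠ 0 := by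
      intro h
      have := congrArg Complex.re h
      simp at this
      linarith
    have hlm1 : (2*(l:ℂ)+2*m+1) ≠ 0 := by
      intro h
      have := congrArg Complex.re h
      simp at this
      linarith
    rw [sub_ne_zero]
    intro h
    rw [div_eq_div_iff hm1 hlm1, one_mul, one_mul] at h
    have := congrArg Complex.re h
    simp at this
    linarith
  rw [heq]
  have h3 : A (2*l) (2*m) * ((1 / (2*m + 1) : ℂ) - 1 / (2*l + 2*m + 1))
      = A (2*k) (2*l + 2*m) * ((1 / (2*m + 1) : ℂ) - 1 / (2*l + 2*m + 1)) := by
    linear_combination -key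
  exact mul_right_cancel₀ hne h3
end

section
/- Let f = ∑ αᵢ qⁱ and g = ∑ βᵢ qⁱ be formal power series with α₀ = β₀ = 1, and define the nth derivative operator D = q·d/dq. Suppose k, l, m are positive integers with m ≥ k and l ≥ 1, and α₁, β₁, γ₁ are complex numbers satisfying the system A_{n1}α₁ + A_{n2}β₁ + A_{n3}γ₁ = 0 for n = 1, 2, 3, where A_{n1} = (−1)ⁿ(2m)_n − (−1)ⁿ(2l+2m)_n, A_{n2} = (−1)ⁿ(2m)_n − (2k)_n, A_{n3} = (2k+2l)_n − (2k)_n (Pochhammer symbols). Then α₁ = β₁ = γ₁ = 0. -/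
open Finset

set_option maxHeartbeats 2000000

/-- The ascending Pochhammer symbol `(x)_n = x(x+1)⋯(x+n−1)` in `ℂ`. -/
def pochC (x : ℂ) (n : ℕ) : ℂ := ∏ i ∈ Finset.range n, (x + i)

/-- If `m ≥ k ≥ 1`, `l ≥ 1`, and `α₁, β₁, γ₁` satisfy the linear system
`A_{n1}α₁ + A_{n2}β₁ + A_{n3}γ₁ = 0` for `n = 1, 2, 3` with
`A_{n1} = (−1)ⁿ(2m)_n − (−1)ⁿ(2l+2m)_n`, `A_{n2} = (−1)ⁿ(2m)_n − (2k)_n`,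
`A_{n3} = (2k+2l)_n − (2k)_n`, then `α₁ = β₁ = γ₁ = 0`. -/
theorem stmt11 (k l m : ℕ) (hk : 0 < k) (hl : 1 ≤ l) (hm : k ≤ m)
    (α₁ β₁ γ₁ : ℂ)
    (hsys : ∀ n : ℕ, n = 1 ∨ n = 2 ∨ n = 3 →
      ((-1 : ℂ) ^ n * pochC (2*m) n - (-1 : ℂ) ^ n * pochC (2*l + 2*m) n) * α₁
        + ((-1 : ℂ) ^ n * pochC (2*m) n - pochC (2*k) n) * β₁
        + (pochC (2*k + 2*l) n - pochC (2*k) n) * γ₁ = 0) :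
    α₁ = 0 ∧ β₁ = 0 ∧ γ₁ = 0 := by
  have h1 := hsys 1 (by norm_num)
  have h2 := hsys 2 (by norm_num)
  have h3 := hsys 3 (by norm_num)
  simp only [pochC, Finset.prod_range_succ, Finset.prod_range_zero, one_mul] at h1 h2 h3
  push_cast at h1 h2 h3
  have hm' : 0 < m := lt_of_lt_of_le hk hm
  have hNpos : 0 < (96)*l^2*m^2 + (128)*l^2*m^3 + (64)*l^2*m^4 + (96)*l^3*m + (384)*l^3*m^2 + (256)*l^3*m^3 + (256)*l^4*m + (320)*l^4*m^2 + (128)*l^5*m + (384)*k*l^2*m^2 + (256)*k*l^2*m^3 + (96)*k*l^3 + (768)*k*l^3*m + (768)*k*l^3*m^2 + (256)*k*l^4 + (640)*k*l^4*m + (128)*k*l^5 + (96)*k^2*l^2 + (384)*k^2*l^2*m + (384)*k^2*l^2*m^2 + (384)*k^2*l^3 + (768)*k^2*l^3*m + (320)*k^2*l^4 + (128)*k^3*l^2 + (256)*k^3*l^2*m + (256)*k^3*l^3 + (64)*k^4*l^2 := by positivity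
  have hD : ((-96)*(l:ℂ)^2*(m:ℂ)^2 + (-128)*(l:ℂ)^2*(m:ℂ)^3 + (-64)*(l:ℂ)^2*(m:ℂ)^4 + (-96)*(l:ℂ)^3*(m:ℂ) + (-384)*(l:ℂ)^3*(m:ℂ)^2 + (-256)*(l:ℂ)^3*(m:ℂ)^3 + (-256)*(l:ℂ)^4*(m:ℂ) + (-320)*(l:ℂ)^4*(m:ℂ)^2 + (-128)*(l:ℂ)^5*(m:ℂ) + (-384)*(k:ℂ)*(l:ℂ)^2*(m:ℂ)^2 + (-256)*(k:ℂ)*(l:ℂ)^2*(m:ℂ)^3 + (-96)*(k:ℂ)*(l:ℂ)^3 + (-768)*(k:ℂ)*(l:ℂ)^3*(m:ℂ) + (-768)*(k:ℂ)*(l:ℂ)^3*(m:ℂ)^2 + (-256)*(k:ℂ)*(l:ℂ)^4 + (-640)*(k:ℂ)*(l:ℂ)^4*(m:ℂ) + (-128)*(k:ℂ)*(l:ℂ)^5 + (-96)*(k:ℂ)^2*(l:ℂ)^2 + (-384)*(k:ℂ)^2*(l:ℂ)^2*(m:ℂ) + (-384)*(k:ℂ)^2*(l:ℂ)^2*(m:ℂ)^2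 + (-384)*(k:ℂ)^2*(l:ℂ)^3 + (-768)*(k:ℂ)^2*(l:ℂ)^3*(m:ℂ) + (-320)*(k:ℂ)^2*(l:ℂ)^4 + (-128)*(k:ℂ)^3*(l:ℂ)^2 + (-256)*(k:ℂ)^3*(l:ℂ)^2*(m:ℂ) + (-256)*(k:ℂ)^3*(l:ℂ)^3 + (-64)*(k:ℂ)^4*(l:ℂ)^2 : ℂ) ≠ 0 := by
    have hEq : ((-96)*(l:ℂ)^2*(m:ℂ)^2 + (-128)*(l:ℂ)^2*(m:ℂ)^3 + (-64)*(l:ℂ)^2*(m:ℂ)^4 + (-96)*(l:ℂ)^3*(m:ℂ) + (-384)*(l:ℂ)^3*(m:ℂ)^2 + (-256)*(l:ℂ)^3*(m:ℂ)^3 + (-256)*(l:ℂ)^4*(m:ℂ) + (-320)*(l:ℂ)^4*(m:ℂ)^2 + (-128)*(l:ℂ)^5*(m:ℂ) + (-384)*(k:ℂ)*(l:ℂ)^2*(m:ℂ)^2 + (-256)*(k:ℂ)*(l:ℂ)^2*(m:ℂ)^3 + (-96)*(k:ℂ)*(l:ℂ)^3 + (-768)*(k:ℂ)*(l:ℂ)^3*(m:ℂ)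 + (-768)*(k:ℂ)*(l:ℂ)^3*(m:ℂ)^2 + (-256)*(k:ℂ)*(l:ℂ)^4 + (-640)*(k:ℂ)*(l:ℂ)^4*(m:ℂ) + (-128)*(k:ℂ)*(l:ℂ)^5 + (-96)*(k:ℂ)^2*(l:ℂ)^2 + (-384)*(k:ℂ)^2*(l:ℂ)^2*(m:ℂ) + (-384)*(k:ℂ)^2*(l:ℂ)^2*(m:ℂ)^2 + (-384)*(k:ℂ)^2*(l:ℂ)^3 + (-768)*(k:ℂ)^2*(l:ℂ)^3*(m:ℂ) + (-320)*(k:ℂ)^2*(l:ℂ)^4 + (-128)*(k:ℂ)^3*(l:ℂ)^2 + (-256)*(k:ℂ)^3*(l:ℂ)^2*(m:ℂ) + (-256)*(k:ℂ)^3*(l:ℂ)^3 + (-64)*(k:ℂ)^4*(l:ℂ)^2 : ℂ) = -(((96)*l^2*m^2 + (128)*l^2*m^3 + (64)*l^2*m^4 + (96)*l^3*m + (384)*l^3*m^2 + (256)*l^3*m^3 + (256)*l^4*m + (320)*l^4*m^2 + (128)*l^5*m + (384)*k*l^2*m^2 + (256)*k*l^2*m^3 + (96)*k*l^3 + (768)*k*l^3*m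 + (768)*k*l^3*m^2 + (256)*k*l^4 + (640)*k*l^4*m + (128)*k*l^5 + (96)*k^2*l^2 + (384)*k^2*l^2*m + (384)*k^2*l^2*m^2 + (384)*k^2*l^3 + (768)*k^2*l^3*m + (320)*k^2*l^4 + (128)*k^3*l^2 + (256)*k^3*l^2*m + (256)*k^3*l^3 + (64)*k^4*l^2 : ℕ) : ℂ) := by
      push_cast; ring
    rw [hEq]
    exact neg_ne_zero.mpr (Nat.cast_ne_zero.mpr hNpos.ne')
  have hA : ((-96)*(l:ℂ)^2*(m:ℂ)^2 + (-128)*(l:ℂ)^2*(m:ℂ)^3 + (-64)*(l:ℂ)^2*(m:ℂ)^4 + (-96)*(l:ℂ)^3*(m:ℂ) + (-384)*(l:ℂ)^3*(m:ℂ)^2 + (-256)*(l:ℂ)^3*(m:ℂ)^3 + (-256)*(l:ℂ)^4*(m:ℂ) + (-320)*(l:ℂ)^4*(m:ℂ)^2 + (-128)*(l:ℂ)^5*(m:ℂ) + (-384)*(k:ℂ)*(l:ℂ)^2*(m:ℂ)^2 + (-256)*(k:ℂ)*(l:ℂ)^2*(m:ℂ)^3 + (-96)*(k:ℂ)*(l:ℂ)^3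 + (-768)*(k:ℂ)*(l:ℂ)^3*(m:ℂ) + (-768)*(k:ℂ)*(l:ℂ)^3*(m:ℂ)^2 + (-256)*(k:ℂ)*(l:ℂ)^4 + (-640)*(k:ℂ)*(l:ℂ)^4*(m:ℂ) + (-128)*(k:ℂ)*(l:ℂ)^5 + (-96)*(k:ℂ)^2*(l:ℂ)^2 + (-384)*(k:ℂ)^2*(l:ℂ)^2*(m:ℂ) + (-384)*(k:ℂ)^2*(l:ℂ)^2*(m:ℂ)^2 + (-384)*(k:ℂ)^2*(l:ℂ)^3 + (-768)*(k:ℂ)^2*(l:ℂ)^3*(m:ℂ) + (-320)*(k:ℂ)^2*(l:ℂ)^4 + (-128)*(k:ℂ)^3*(l:ℂ)^2 + (-256)*(k:ℂ)^3*(l:ℂ)^2*(m:ℂ) + (-256)*(k:ℂ)^3*(l:ℂ)^3 + (-64)*(k:ℂ)^4*(l:ℂ)^2 : ℂ) * α₁ = 0 := by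
    linear_combination ((16)*(l:ℂ)*(m:ℂ) + (40)*(l:ℂ)*(m:ℂ)^2 + (16)*(l:ℂ)*(m:ℂ)^3 + (40)*(l:ℂ)^2*(m:ℂ) + (96)*(l:ℂ)^2*(m:ℂ)^2 + (32)*(l:ℂ)^2*(m:ℂ)^3 + (16)*(l:ℂ)^3*(m:ℂ) + (32)*(l:ℂ)^3*(m:ℂ)^2 + (80)*(k:ℂ)*(l:ℂ)*(m:ℂ) + (192)*(k:ℂ)*(l:ℂ)*(m:ℂ)^2 + (64)*(k:ℂ)*(l:ℂ)*(m:ℂ)^3 + (-8)*(k:ℂ)*(l:ℂ)^2 + (48)*(k:ℂ)*(l:ℂ)^2*(m:ℂ) + (96)*(k:ℂ)*(l:ℂ)^2*(m:ℂ)^2 + (-16)*(k:ℂ)*(l:ℂ)^3 + (-8)*(k:ℂ)^2*(l:ℂ) + (48)*(k:ℂ)^2*(l:ℂ)*(m:ℂ) + (96)*(k:ℂ)^2*(l:ℂ)*(m:ℂ)^2 + (-48)*(k:ℂ)^2*(l:ℂ)^2 + (-32)*(k:ℂ)^2*(l:ℂ)^3 + (-32)*(k:ℂ)^3*(l:ℂ)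 + (-64)*(k:ℂ)^3*(l:ℂ)^2 + (-32)*(k:ℂ)^4*(l:ℂ) : ℂ) * h1 + ((-24)*(l:ℂ)*(m:ℂ)^2 + (-16)*(l:ℂ)*(m:ℂ)^3 + (24)*(l:ℂ)^2*(m:ℂ) + (16)*(l:ℂ)^3*(m:ℂ) + (48)*(k:ℂ)*(l:ℂ)*(m:ℂ) + (24)*(k:ℂ)*(l:ℂ)^2 + (48)*(k:ℂ)*(l:ℂ)^2*(m:ℂ) + (16)*(k:ℂ)*(l:ℂ)^3 + (24)*(k:ℂ)^2*(l:ℂ) + (48)*(k:ℂ)^2*(l:ℂ)*(m:ℂ) + (48)*(k:ℂ)^2*(l:ℂ)^2 + (32)*(k:ℂ)^3*(l:ℂ) : ℂ) * h2 + ((-8)*(l:ℂ)*(m:ℂ) + (-8)*(l:ℂ)*(m:ℂ)^2 + (-8)*(l:ℂ)^2*(m:ℂ) + (-16)*(k:ℂ)*(l:ℂ)*(m:ℂ) + (-8)*(k:ℂ)*(l:ℂ)^2 + (-8)*(k:ℂ)^2*(l:ℂ) : ℂ) * h3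
  have hB : ((-96)*(l:ℂ)^2*(m:ℂ)^2 + (-128)*(l:ℂ)^2*(m:ℂ)^3 + (-64)*(l:ℂ)^2*(m:ℂ)^4 + (-96)*(l:ℂ)^3*(m:ℂ) + (-384)*(l:ℂ)^3*(m:ℂ)^2 + (-256)*(l:ℂ)^3*(m:ℂ)^3 + (-256)*(l:ℂ)^4*(m:ℂ) + (-320)*(l:ℂ)^4*(m:ℂ)^2 + (-128)*(l:ℂ)^5*(m:ℂ) + (-384)*(k:ℂ)*(l:ℂ)^2*(m:ℂ)^2 + (-256)*(k:ℂ)*(l:ℂ)^2*(m:ℂ)^3 + (-96)*(k:ℂ)*(l:ℂ)^3 + (-768)*(k:ℂ)*(l:ℂ)^3*(m:ℂ) + (-768)*(k:ℂ)*(l:ℂ)^3*(m:ℂ)^2 + (-256)*(k:ℂ)*(l:ℂ)^4 + (-640)*(k:ℂ)*(l:ℂ)^4*(m:ℂ) + (-128)*(k:ℂ)*(l:ℂ)^5 + (-96)*(k:ℂ)^2*(l:ℂ)^2 + (-384)*(k:ℂ)^2*(l:ℂ)^2*(m:ℂ) + (-384)*(k:ℂ)^2*(l:ℂ)^2*(m:ℂ)^2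 + (-384)*(k:ℂ)^2*(l:ℂ)^3 + (-768)*(k:ℂ)^2*(l:ℂ)^3*(m:ℂ) + (-320)*(k:ℂ)^2*(l:ℂ)^4 + (-128)*(k:ℂ)^3*(l:ℂ)^2 + (-256)*(k:ℂ)^3*(l:ℂ)^2*(m:ℂ) + (-256)*(k:ℂ)^3*(l:ℂ)^3 + (-64)*(k:ℂ)^4*(l:ℂ)^2 : ℂ) * β₁ = 0 := by
    linear_combination ((16)*(l:ℂ)^2 + (80)*(l:ℂ)^2*(m:ℂ) + (48)*(l:ℂ)^2*(m:ℂ)^2 + (80)*(l:ℂ)^3 + (240)*(l:ℂ)^3*(m:ℂ) + (96)*(l:ℂ)^3*(m:ℂ)^2 + (128)*(l:ℂ)^4 + (160)*(l:ℂ)^4*(m:ℂ) + (64)*(l:ℂ)^5 + (80)*(k:ℂ)*(l:ℂ)^2 + (384)*(k:ℂ)*(l:ℂ)^2*(m:ℂ) + (192)*(k:ℂ)*(l:ℂ)^2*(m:ℂ)^2 + (240)*(k:ℂ)*(l:ℂ)^3 + (384)*(k:ℂ)*(l:ℂ)^3*(m:ℂ) + (160)*(k:ℂ)*(l:ℂ)^4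 + (48)*(k:ℂ)^2*(l:ℂ)^2 + (192)*(k:ℂ)^2*(l:ℂ)^2*(m:ℂ) + (96)*(k:ℂ)^2*(l:ℂ)^3 : ℂ) * h1 + ((-48)*(l:ℂ)^2*(m:ℂ) + (-48)*(l:ℂ)^2*(m:ℂ)^2 + (-48)*(l:ℂ)^3*(m:ℂ) + (48)*(k:ℂ)*(l:ℂ)^2 + (48)*(k:ℂ)*(l:ℂ)^3 + (48)*(k:ℂ)^2*(l:ℂ)^2 : ℂ) * h2 + ((-8)*(l:ℂ)^2 + (-16)*(l:ℂ)^2*(m:ℂ) + (-16)*(l:ℂ)^3 + (-16)*(k:ℂ)*(l:ℂ)^2 : ℂ) * h3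
  have hC : ((-96)*(l:ℂ)^2*(m:ℂ)^2 + (-128)*(l:ℂ)^2*(m:ℂ)^3 + (-64)*(l:ℂ)^2*(m:ℂ)^4 + (-96)*(l:ℂ)^3*(m:ℂ) + (-384)*(l:ℂ)^3*(m:ℂ)^2 + (-256)*(l:ℂ)^3*(m:ℂ)^3 + (-256)*(l:ℂ)^4*(m:ℂ) + (-320)*(l:ℂ)^4*(m:ℂ)^2 + (-128)*(l:ℂ)^5*(m:ℂ) + (-384)*(k:ℂ)*(l:ℂ)^2*(m:ℂ)^2 + (-256)*(k:ℂ)*(l:ℂ)^2*(m:ℂ)^3 + (-96)*(k:ℂ)*(l:ℂ)^3 + (-768)*(k:ℂ)*(l:ℂ)^3*(m:ℂ) + (-768)*(k:ℂ)*(l:ℂ)^3*(m:ℂ)^2 + (-256)*(k:ℂ)*(l:ℂ)^4 + (-640)*(k:ℂ)*(l:ℂ)^4*(m:ℂ) + (-128)*(k:ℂ)*(l:ℂ)^5 + (-96)*(k:ℂ)^2*(l:ℂ)^2 + (-384)*(k:ℂ)^2*(l:ℂ)^2*(m:ℂ) + (-384)*(k:ℂ)^2*(l:ℂ)^2*(m:ℂ)^2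 + (-384)*(k:ℂ)^2*(l:ℂ)^3 + (-768)*(k:ℂ)^2*(l:ℂ)^3*(m:ℂ) + (-320)*(k:ℂ)^2*(l:ℂ)^4 + (-128)*(k:ℂ)^3*(l:ℂ)^2 + (-256)*(k:ℂ)^3*(l:ℂ)^2*(m:ℂ) + (-256)*(k:ℂ)^3*(l:ℂ)^3 + (-64)*(k:ℂ)^4*(l:ℂ)^2 : ℂ) * γ₁ = 0 := by
    linear_combination ((-8)*(l:ℂ)*(m:ℂ)^2 + (-32)*(l:ℂ)*(m:ℂ)^3 + (-32)*(l:ℂ)*(m:ℂ)^4 + (-8)*(l:ℂ)^2*(m:ℂ) + (-48)*(l:ℂ)^2*(m:ℂ)^2 + (-64)*(l:ℂ)^2*(m:ℂ)^3 + (-16)*(l:ℂ)^3*(m:ℂ) + (-32)*(l:ℂ)^3*(m:ℂ)^2 + (16)*(k:ℂ)*(l:ℂ) + (80)*(k:ℂ)*(l:ℂ)*(m:ℂ) + (48)*(k:ℂ)*(l:ℂ)*(m:ℂ)^2 + (40)*(k:ℂ)*(l:ℂ)^2 + (48)*(k:ℂ)*(l:ℂ)^2*(m:ℂ) + (16)*(k:ℂ)*(l:ℂ)^3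 + (40)*(k:ℂ)^2*(l:ℂ) + (192)*(k:ℂ)^2*(l:ℂ)*(m:ℂ) + (96)*(k:ℂ)^2*(l:ℂ)*(m:ℂ)^2 + (96)*(k:ℂ)^2*(l:ℂ)^2 + (96)*(k:ℂ)^2*(l:ℂ)^2*(m:ℂ) + (32)*(k:ℂ)^2*(l:ℂ)^3 + (16)*(k:ℂ)^3*(l:ℂ) + (64)*(k:ℂ)^3*(l:ℂ)*(m:ℂ) + (32)*(k:ℂ)^3*(l:ℂ)^2 : ℂ) * h1 + ((-24)*(l:ℂ)*(m:ℂ)^2 + (-32)*(l:ℂ)*(m:ℂ)^3 + (-24)*(l:ℂ)^2*(m:ℂ) + (-48)*(l:ℂ)^2*(m:ℂ)^2 + (-16)*(l:ℂ)^3*(m:ℂ) + (-48)*(k:ℂ)*(l:ℂ)*(m:ℂ) + (-48)*(k:ℂ)*(l:ℂ)*(m:ℂ)^2 + (-24)*(k:ℂ)*(l:ℂ)^2 + (-48)*(k:ℂ)*(l:ℂ)^2*(m:ℂ) + (-16)*(k:ℂ)*(l:ℂ)^3 + (24)*(k:ℂ)^2*(l:ℂ) + (16)*(k:ℂ)^3*(l:ℂ)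 : ℂ) * h2 + ((-8)*(l:ℂ)*(m:ℂ)^2 + (-8)*(l:ℂ)^2*(m:ℂ) + (-8)*(k:ℂ)*(l:ℂ) + (-16)*(k:ℂ)*(l:ℂ)*(m:ℂ) + (-8)*(k:ℂ)*(l:ℂ)^2 + (-8)*(k:ℂ)^2*(l:ℂ) : ℂ) * h3
  exact ⟨(mul_eq_zero.mp hA).resolve_left hD,
    (mul_eq_zero.mp hB).resolve_left hD,
    (mul_eq_zero.mp hC).resolve_left hD⟩
end

section
/- With the coefficients A_{ij} (1 ≤ i,j ≤ 3) given by A_{11}=2l, A_{12}=−2k−2m, A_{13}=2l, A_{21}=−(4m+2l+1)(2l), A_{22}=(2m−2k)(2m+2k+1), A_{23}=(4k+2l+1)(2l), A_{31}=(2l)³+3(2m+1)(2l)²+(3(2m)²+6(2m)+2)(2l), A_{32}=−2m(2m+1)(2m+2)−2k(2k+1)(2k+2), A_{33}=(2l)³+3(2k+1)(2l)²+(3(2k)²+6(2k)+2)(2l), the determinant det(A_{ij}) equals (2l)²·{−6(k+l+m+1)(2m−2k)² + (2k+2l+2m+1)[−(2k+2m)(6k+6l+2m)−12k](2m−2k)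 − (4k+4l+4m+2)(2k+2m)(2k+2l)(4k+2l+3)}, and this is strictly negative whenever k, m are positive integers with m ≥ k and l ≥ 1 is an integer. -/
/-- The determinant of the explicit 3×3 matrix `(A_{ij})` equals the stated
expression and is strictly negative for integers `k, m ≥ 1`, `l ≥ 1`, `m ≥ k`. -/
theorem stmt12 (k l m : ℤ) (hk : 1 ≤ k) (hm : 1 ≤ m) (hl : 1 ≤ l) (hmk : k ≤ m) :
    Matrix.det
        !![(2*(l:ℝ)), -(2*(k:ℝ)) - 2*m, 2*(l:ℝ);
           -(4*(m:ℝ) + 2*l + 1) * (2*l), (2*(m:ℝ) - 2*k) * (2*m + 2*k + 1),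
             (4*(k:ℝ) + 2*l + 1) * (2*l);
           (2*(l:ℝ))^3 + 3*(2*m + 1)*(2*l)^2 + (3*(2*m)^2 + 6*(2*m) + 2)*(2*l),
             -(2*(m:ℝ))*(2*m + 1)*(2*m + 2) - (2*k)*(2*k + 1)*(2*k + 2),
             (2*(l:ℝ))^3 + 3*(2*k + 1)*(2*l)^2 + (3*(2*k)^2 + 6*(2*k) + 2)*(2*l)]
      = (2*(l:ℝ))^2 *
          (-(6*((k:ℝ) + l + m + 1)) * (2*m - 2*k)^2
            + (2*(k:ℝ) + 2*l + 2*m + 1) *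
                (-((2*(k:ℝ) + 2*m) * (6*k + 6*l + 2*m)) - 12*k) * (2*m - 2*k)
            - (4*(k:ℝ) + 4*l + 4*m + 2) * (2*k + 2*m) * (2*k + 2*l) * (4*k + 2*l + 3)) ∧
    Matrix.det
        !![(2*(l:ℝ)), -(2*(k:ℝ)) - 2*m, 2*(l:ℝ);
           -(4*(m:ℝ) + 2*l + 1) * (2*l), (2*(m:ℝ) - 2*k) * (2*m + 2*k + 1),
             (4*(k:ℝ) + 2*l + 1) * (2*l);
           (2*(l:ℝ))^3 + 3*(2*m + 1)*(2*l)^2 + (3*(2*m)^2 + 6*(2*m) + 2)*(2*l),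
             -(2*(m:ℝ))*(2*m + 1)*(2*m + 2) - (2*k)*(2*k + 1)*(2*k + 2),
             (2*(l:ℝ))^3 + 3*(2*k + 1)*(2*l)^2 + (3*(2*k)^2 + 6*(2*k) + 2)*(2*l)]
      < 0 := by
  have hk' : (1:ℝ) ≤ k := by exact_mod_cast hk
  have hm' : (1:ℝ) ≤ m := by exact_mod_cast hm
  have hl' : (1:ℝ) ≤ l := by exact_mod_cast hl
  have hmk' : (k:ℝ) ≤ m := by exact_mod_cast hmk
  have heq : Matrix.det
        !![(2*(l:ℝ)), -(2*(k:ℝ)) - 2*m, 2*(l:ℝ);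
           -(4*(m:ℝ) + 2*l + 1) * (2*l), (2*(m:ℝ) - 2*k) * (2*m + 2*k + 1),
             (4*(k:ℝ) + 2*l + 1) * (2*l);
           (2*(l:ℝ))^3 + 3*(2*m + 1)*(2*l)^2 + (3*(2*m)^2 + 6*(2*m) + 2)*(2*l),
             -(2*(m:ℝ))*(2*m + 1)*(2*m + 2) - (2*k)*(2*k + 1)*(2*k + 2),
             (2*(l:ℝ))^3 + 3*(2*k + 1)*(2*l)^2 + (3*(2*k)^2 + 6*(2*k) + 2)*(2*l)]
      = (2*(l:ℝ))^2 *
          (-(6*((k:ℝ) + l + m + 1)) * (2*m - 2*k)^2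
            + (2*(k:ℝ) + 2*l + 2*m + 1) *
                (-((2*(k:ℝ) + 2*m) * (6*k + 6*l + 2*m)) - 12*k) * (2*m - 2*k)
            - (4*(k:ℝ) + 4*l + 4*m + 2) * (2*k + 2*m) * (2*k + 2*l) * (4*k + 2*l + 3)) := by
    rw [Matrix.det_fin_three]
    simp [Matrix.cons_val_zero, Matrix.cons_val_one]
    ring
  refine ⟨heq, ?_⟩
  rw [heq]
  have h1 : (0:ℝ) < (2*(l:ℝ))^2 := by positivity
  have hA : (-(6*((k:ℝ) + l + m + 1)) * (2*m - 2*k)^2) ≤ 0 := by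
    have : (0:ℝ) < 6*((k:ℝ) + l + m + 1) := by linarith
    nlinarith [sq_nonneg (2*(m:ℝ) - 2*k)]
  have hB : (2*(k:ℝ) + 2*l + 2*m + 1) *
      (-((2*(k:ℝ) + 2*m) * (6*k + 6*l + 2*m)) - 12*k) * (2*m - 2*k) ≤ 0 := by
    apply mul_nonpos_of_nonpos_of_nonneg
    · apply mul_nonpos_of_nonneg_of_nonpos
      · linarith
      · nlinarith
    · linarith
  have hC : 0 < (4*(k:ℝ) + 4*l + 4*m + 2) * (2*k + 2*m) * (2*k + 2*l) * (4*k + 2*l + 3) := by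
    positivity
  have h2 : (-(6*((k:ℝ) + l + m + 1)) * (2*m - 2*k)^2
            + (2*(k:ℝ) + 2*l + 2*m + 1) *
                (-((2*(k:ℝ) + 2*m) * (6*k + 6*l + 2*m)) - 12*k) * (2*m - 2*k)
            - (4*(k:ℝ) + 4*l + 4*m + 2) * (2*k + 2*m) * (2*k + 2*l) * (4*k + 2*l + 3)) < 0 := by
    linarith
  exact mul_neg_of_pos_of_neg h1 h2
end

section
/- Suppose nonzero formal q-expansions f = ∑_{i≥r} αᵢqⁱ, g = ∑_{i≥s} βᵢqⁱ, h = ∑_{i≥t} γᵢqⁱ with α_r, β_s, γ_t ≠ 0 and weights 2k, 2l, 2m satisfy, for n = 1, the lowest-order Rankin–Cohen identity [fg,h]_1 = [f,gh]_1 at the q^{r+s+t} coefficient. Then (k+m)s = l(r+t). -/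
open PowerSeries

/-- If `f, g, h` have leading terms `α_r q^r`, `β_s q^s`, `γ_t q^t` and the
`n = 1` Rankin–Cohen identity `[fg,h]_1 = [f,gh]_1` (with weights `2k+2l` and `2m`,
resp. `2k` and `2l+2m`, and `D = q d/dq`) holds at the `q^{r+s+t}` coefficient,
then `(k+m)s = l(r+t)`. -/
theorem stmt18 (k l m : ℕ) (hk : 0 < k) (hl : 0 < l) (hm : 0 < m)
    (r s t : ℕ) (α β γ : ℂ) (hα : α ≠ 0) (hβ : β ≠ 0) (hγ : γ ≠ 0)
    (hcoeff :
      -- coefficient of q^{r+s+t} in [fg, h]_1 = 2(k+l)·(fg)·Dh − 2m·D(fg)·h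
      (2*(k:ℂ) + 2*l) * (α*β) * ((t:ℂ) * γ) - 2*(m:ℂ) * (((r:ℂ) + s) * (α*β)) * γ
        -- equals the coefficient of q^{r+s+t} in [f, gh]_1 = 2k·f·D(gh) − 2(l+m)·Df·(gh)
        = 2*(k:ℂ) * α * (((s:ℂ) + t) * (β*γ)) - (2*(l:ℂ) + 2*m) * ((r:ℂ) * α) * (β*γ)) :
    (k + m) * s = l * (r + t) := by
  have key : ((k + m) * s : ℂ) = (l * (r + t) : ℂ) := by
    have h : (α*β*γ) * (((k + m) * s : ℕ) : ℂ) = (α*β*γ) * ((l * (r + t) : ℕ) : ℂ) := by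
      push_cast
      linear_combination (-1/2 : ℂ) * hcoeff
    exact_mod_cast mul_left_cancel₀ (mul_ne_zero (mul_ne_zero hα hβ) hγ) h
  exact_mod_cast key
end
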